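/- Let G be a finite group, α : G × G → ℂˣ a 2-cocycle such that the twisted group algebra ℂ^αG is a simple ring, and let N ⊴ G be a normal subgroup; write H := G/N. Grade ℂ^αG by H, the homogeneous component of a coset c ∈ H being A_c := span_ℂ{ u_g : g ∈ c }. Let End_ℂ(ℂ[H]) be the endomorphism algebra of the vector space with basis { e_h }_{h ∈ H}, graded by H with homogeneous component of degree h equal to span_ℂ{ E_{h·h'', h''} : h'' ∈ H }, where E_{h₁,h₂} is the endomorphism sending e_{h₂} to e_{h₁} and all other basis vectors to 0 (the elementary crossed product H-grading). Then there exists a ℂ-algebra isomorphism ψ : ℂ^αG → End_ℂ(ℂ[H]) satisfying ψ(A_c) = (End_ℂ(ℂ[H]))_c for every c ∈ H if and only if N is a Lagrangian with respect to the class of α, i.e. the restriction of the class of α to N is trivial and |N|² = |G|. -/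

import Mathlib

/-- A 2-cocycle on `G` with values in `ℂˣ`. -/
def IsTwoCocycle {G : Type} [Group G] (α : G → G → ℂˣ) : Prop :=
  ∀ g h k : G, α g h * α (g * h) k = α h k * α g (h * k)

/-- A twisted group algebra `ℂ^αG`: a ℂ-algebra with a basis `u_g` of invertible
elements satisfying `u_g * u_h = α g h • u_{gh}`. -/
structure TwistedGroupAlgebra (G : Type) [Group G] (α : G → G → ℂˣ) where
  carrier : Type
  [ringStr : Ring carrier]
  [algStr : Algebra ℂ carrier]
  u : G → carrierˣ
  basis : Module.Basis G ℂ carrier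
  basis_eq : ∀ g : G, basis g = (u g : carrier)
  u_mul : ∀ g h : G, (u g : carrier) * (u h : carrier) = (α g h : ℂ) • (u (g * h) : carrier)

attribute [instance] TwistedGroupAlgebra.ringStr TwistedGroupAlgebra.algStr

namespace TwistedGroupAlgebra

variable {G : Type} [Group G] {α : G → G → ℂˣ}

/-- The subalgebra `ℂ^αN ⊆ ℂ^αG` spanned by the `u_n`, `n ∈ N`. -/
def sub (A : TwistedGroupAlgebra G α) (N : Subgroup G) : Subalgebra ℂ A.carrier :=
  Algebra.adjoin ℂ ((fun g : G => (A.u g : A.carrier)) '' (N : Set G))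

/-- The dimension over `ℂ` of a `ℂ^αN`-module. -/
noncomputable def dimC (A : TwistedGroupAlgebra G α) (N : Subgroup G) (M : Type)
    [AddCommGroup M] [Module (A.sub N) M] : ℕ :=
  Module.finrank ℂ (RestrictScalars ℂ (A.sub N) M)

/-- `TwistIso A N g M M'` says that `M'` is isomorphic to the twist `{}^{g}M` of the
`ℂ^αN`-module `M`, i.e. there is an additive bijection `e : M' → M` with
`e (a • m') = (u_g⁻¹ a u_g) • e m'` for all `a ∈ ℂ^αN`. -/
def TwistIso (A : TwistedGroupAlgebra G α) (N : Subgroup G) (g : G)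
    (M M' : Type) [AddCommGroup M] [Module (A.sub N) M]
    [AddCommGroup M'] [Module (A.sub N) M'] : Prop :=
  ∃ e : M' ≃+ M, ∀ (a : A.sub N) (m' : M')
    (h : (((A.u g)⁻¹ : A.carrierˣ) : A.carrier) * (a : A.carrier) * (A.u g : A.carrier) ∈
      A.sub N),
    e (a • m') =
      (⟨(((A.u g)⁻¹ : A.carrierˣ) : A.carrier) * (a : A.carrier) * (A.u g : A.carrier), h⟩ :
        A.sub N) • e m'

/-- The action of `G/N` on isomorphism classes of simple `ℂ^αN`-modules is transitive. -/
def TransAction (A : TwistedGroupAlgebra G α) (N : Subgroup G) : Prop :=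
  ∀ (M : Type) [AddCommGroup M] [Module (A.sub N) M]
    (M' : Type) [AddCommGroup M'] [Module (A.sub N) M'],
    IsSimpleModule (A.sub N) M → IsSimpleModule (A.sub N) M' →
    ∃ g : G, TwistIso A N g M M'

/-- The action of `G/N` on isomorphism classes of simple `ℂ^αN`-modules is free. -/
def FreeAction (A : TwistedGroupAlgebra G α) (N : Subgroup G) : Prop :=
  ∀ (M : Type) [AddCommGroup M] [Module (A.sub N) M], IsSimpleModule (A.sub N) M →
    ∀ g : G, TwistIso A N g M M → g ∈ N

/-- The restriction of the cohomology class of `α` to the subgroup `N` is trivial. -/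
def RestTrivial (α : G → G → ℂˣ) (N : Subgroup G) : Prop :=
  ∃ β : N → ℂˣ, ∀ n n' : N, α n n' = β n * β n' * (β (n * n'))⁻¹

end TwistedGroupAlgebra

/-- The elementary matrix unit `E_{h₁,h₂}` of `End_ℂ(ℂ[H])`, sending the basis vector
`e_{h₂}` to `e_{h₁}` and all other basis vectors to `0`. -/
noncomputable def Eunit (H : Type) [DecidableEq H] (h₁ h₂ : H) :
    Module.End ℂ (H → ℂ) :=
  (LinearMap.single ℂ (fun _ : H => ℂ) h₁).comp (LinearMap.proj h₂)

/-- The degree-`h` homogeneous component `span_ℂ{E_{h·h'',h''} : h'' ∈ H}` of the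
elementary crossed product `H`-grading of `End_ℂ(ℂ[H])`. -/
noncomputable def elemComp (H : Type) [Group H] [DecidableEq H] (h : H) :
    Submodule ℂ (Module.End ℂ (H → ℂ)) :=
  Submodule.span ℂ {T | ∃ h'' : H, T = Eunit H (h * h'') h''}

namespace TwistedGroupAlgebra

/-- The homogeneous component `A_c = span_ℂ{u_g : g ∈ c}` of the quotient
`G/N`-grading of `ℂ^αG`, for a coset `c ∈ G/N`. -/
def quotComp {G : Type} [Group G] {α : G → G → ℂˣ} (A : TwistedGroupAlgebra G α)
    (N : Subgroup G) (c : G ⧸ N) : Submodule ℂ A.carrier :=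
  Submodule.span ℂ {x | ∃ g : G, (g : G ⧸ N) = c ∧ x = (A.u g : A.carrier)}

end TwistedGroupAlgebra

section Stmt10Aux

open TwistedGroupAlgebra

variable {G : Type} [Group G] (α : G → G → ℂˣ)

lemma alpha_one_left (hα : IsTwoCocycle α) (k : G) : α 1 k = α 1 1 := by
  have h := hα 1 1 k
  rw [one_mul, one_mul] at h
  exact (mul_right_cancel h).symm

lemma alpha_one_right (hα : IsTwoCocycle α) (g : G) : α g 1 = α 1 1 := by
  have h := hα g 1 1
  rw [mul_one, one_mul] at h
  exact mul_right_cancel h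

lemma carrier_nontrivial (A : TwistedGroupAlgebra G α) : Nontrivial A.carrier :=
  nontrivial_of_ne (A.basis 1) 0 (A.basis.ne_zero 1)

lemma u_one_eq (A : TwistedGroupAlgebra G α) :
    (A.u 1 : A.carrier) = ((α 1 1 : ℂˣ) : ℂ) • 1 := by
  have h := A.u_mul 1 1
  rw [show (1 : G) * 1 = 1 from mul_one 1] at h
  have h2 : (A.u 1 : A.carrier) * (A.u 1 : A.carrier)
      = (A.u 1 : A.carrier) * (((α 1 1 : ℂˣ) : ℂ) • 1) := by
    rw [h, mul_smul_comm, mul_one]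
  exact (Units.mul_right_inj (A.u 1)).mp h2

lemma smul_unit_cancel (A : TwistedGroupAlgebra G α) {s t : ℂ} (Y : A.carrierˣ)
    (h : s • (Y : A.carrier) = t • (Y : A.carrier)) : s = t := by
  have := carrier_nontrivial α A
  exact smul_left_injective ℂ Y.ne_zero h

variable (N : Subgroup G) [N.Normal]

/-- A choice of coset representatives. -/
noncomputable def sig (c : G ⧸ N) : G := c.out

lemma sig_spec (c : G ⧸ N) : ((sig N c : G) : G ⧸ N) = c := QuotientGroup.out_eq' c

/-- The `N`-part in the decomposition `g · sig(h) = sig(ḡ·h) · nn g h`. -/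
noncomputable def nn (g : G) (h : G ⧸ N) : G :=
  (sig N ((g : G ⧸ N) * h))⁻¹ * g * sig N h

lemma nn_mem (g : G) (h : G ⧸ N) : nn N g h ∈ N := by
  have h1 := sig_spec N ((g : G ⧸ N) * h)
  have h2 := sig_spec N h
  rw [← QuotientGroup.eq_one_iff]
  show ((((sig N ((g : G ⧸ N) * h))⁻¹ * g * sig N h : G)) : G ⧸ N) = 1
  simp only [QuotientGroup.mk_mul, QuotientGroup.mk_inv, h1, h2]
  group

lemma sig_mul_nn (g : G) (h : G ⧸ N) :
    sig N ((g : G ⧸ N) * h) * nn N g h = g * sig N h := by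
  unfold nn; group

lemma nn_one (h : G ⧸ N) : nn N 1 h = 1 := by
  unfold nn
  rw [show ((1 : G) : G ⧸ N) = 1 from QuotientGroup.mk_one N, one_mul]
  group

variable (β : N → ℂˣ)

/-- The structure constants of the action of `ℂ^αG` on the induced module. -/
noncomputable def ccc (g : G) (h : G ⧸ N) : ℂ :=
  (α g (sig N h) : ℂ) * ((α (sig N ((g : G ⧸ N) * h)) (nn N g h) : ℂ))⁻¹ *
    ((β ⟨nn N g h, nn_mem N g h⟩ : ℂˣ) : ℂ)

lemma ccc_ne_zero (g : G) (h : G ⧸ N) : ccc α N β g h ≠ 0 :=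
  mul_ne_zero (mul_ne_zero (Units.ne_zero _) (inv_ne_zero (Units.ne_zero _)))
    (Units.ne_zero _)

lemma beta_one (hβ : ∀ n n' : N, α n n' = β n * β n' * (β (n * n'))⁻¹) :
    β 1 = α 1 1 := by
  have h := hβ 1 1
  rw [mul_one] at h
  rw [show ((1 : N) : G) = 1 from rfl] at h
  rw [h]; group

lemma ccc_one (hβ : ∀ n n' : N, α n n' = β n * β n' * (β (n * n'))⁻¹)
    (hα : IsTwoCocycle α) (h : G ⧸ N) : ccc α N β 1 h = ((α 1 1 : ℂˣ) : ℂ) := by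
  unfold ccc
  have e1 : (⟨nn N 1 h, nn_mem N 1 h⟩ : N) = 1 := by
    ext; simp [nn_one]
  rw [e1, beta_one α N β hβ, alpha_one_left α hα (sig N h)]
  rw [show ((1 : G) : G ⧸ N) = 1 from QuotientGroup.mk_one N, one_mul, nn_one,
    alpha_one_right α hα (sig N h)]
  field_simp

lemma keyA (A : TwistedGroupAlgebra G α) (g : G) (h : G ⧸ N) :
    (A.u g : A.carrier) * (A.u (sig N h) : A.carrier) =
      (ccc α N β g h * ((β ⟨nn N g h, nn_mem N g h⟩ : ℂˣ) : ℂ)⁻¹) •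
        ((A.u (sig N ((g : G ⧸ N) * h)) : A.carrier) * (A.u (nn N g h) : A.carrier)) := by
  rw [A.u_mul (sig N ((g : G ⧸ N) * h)) (nn N g h), sig_mul_nn, A.u_mul g (sig N h),
    smul_smul]
  congr 1
  unfold ccc
  field_simp

lemma keyE (A : TwistedGroupAlgebra G α)
    (hβ : ∀ n n' : N, α n n' = β n * β n' * (β (n * n'))⁻¹)
    (g g' : G) (h : G ⧸ N) :
    ccc α N β g ((g' : G ⧸ N) * h) * ccc α N β g' h = (α g g' : ℂ) * ccc α N β (g * g') h := by
  classical
  have hq : (g : G ⧸ N) * ((g' : G ⧸ N) * h) = ((g * g' : G) : G ⧸ N) * h := by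
    rw [QuotientGroup.mk_mul, mul_assoc]
  set n' : G := nn N g' h with hn'def
  set n₁ : G := nn N g ((g' : G ⧸ N) * h) with hn₁def
  set n₂ : G := nn N (g * g') h with hn₂def
  have hn : n₁ * n' = n₂ := by
    rw [hn₁def, hn'def, hn₂def]
    unfold nn
    rw [hq]
    group
  have key1 := keyA α N β A g' h
  have key2 := keyA α N β A g ((g' : G ⧸ N) * h)
  rw [hq] at key2
  have key3 := keyA α N β A (g * g') h
  -- both ways to compute (u g * u g') * u (sig h)
  have way2 : ((A.u g : A.carrier) * (A.u g' : A.carrier)) * (A.u (sig N h) : A.carrier) =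
      ((α g g' : ℂ) * (ccc α N β (g * g') h *
        ((β ⟨n₂, hn₂def ▸ nn_mem N (g * g') h⟩ : ℂˣ) : ℂ)⁻¹)) •
        ((A.u (sig N (((g * g' : G) : G ⧸ N) * h)) : A.carrier) *
          (A.u n₂ : A.carrier)) := by
    rw [A.u_mul g g', smul_mul_assoc, key3, smul_smul]
  have way1 : ((A.u g : A.carrier) * (A.u g' : A.carrier)) * (A.u (sig N h) : A.carrier) =
      (((ccc α N β g' h * ((β ⟨n', hn'def ▸ nn_mem N g' h⟩ : ℂˣ) : ℂ)⁻¹)) *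
        ((ccc α N β g ((g' : G ⧸ N) * h) *
          ((β ⟨n₁, hn₁def ▸ nn_mem N g ((g' : G ⧸ N) * h)⟩ : ℂˣ) : ℂ)⁻¹)) *
        (α n₁ n' : ℂ)) •
        ((A.u (sig N (((g * g' : G) : G ⧸ N) * h)) : A.carrier) *
          (A.u n₂ : A.carrier)) := by
    rw [mul_assoc, key1, mul_smul_comm, ← mul_assoc, key2, smul_mul_assoc, smul_smul,
      mul_assoc ((A.u (sig N (((g * g' : G) : G ⧸ N) * h)) : A.carrier)),
      A.u_mul n₁ n', hn, mul_smul_comm, smul_smul, mul_assoc]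
  have E : (((ccc α N β g' h * ((β ⟨n', hn'def ▸ nn_mem N g' h⟩ : ℂˣ) : ℂ)⁻¹)) *
        ((ccc α N β g ((g' : G ⧸ N) * h) *
          ((β ⟨n₁, hn₁def ▸ nn_mem N g ((g' : G ⧸ N) * h)⟩ : ℂˣ) : ℂ)⁻¹)) *
        (α n₁ n' : ℂ)) = ((α g g' : ℂ) * (ccc α N β (g * g') h *
        ((β ⟨n₂, hn₂def ▸ nn_mem N (g * g') h⟩ : ℂˣ) : ℂ)⁻¹)) :=
    smul_unit_cancel α A
      (A.u (sig N (((g * g' : G) : G ⧸ N) * h)) * A.u n₂)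
      (by rw [Units.val_mul, ← way1, ← way2])
  -- rewrite α n₁ n' via β
  have hc : (α n₁ n' : ℂ) =
      ((β ⟨n₁, hn₁def ▸ nn_mem N g ((g' : G ⧸ N) * h)⟩ : ℂˣ) : ℂ) *
      ((β ⟨n', hn'def ▸ nn_mem N g' h⟩ : ℂˣ) : ℂ) *
      (((β ⟨n₂, hn₂def ▸ nn_mem N (g * g') h⟩ : ℂˣ) : ℂ))⁻¹ := by
    have := hβ ⟨n₁, hn₁def ▸ nn_mem N g ((g' : G ⧸ N) * h)⟩
      ⟨n', hn'def ▸ nn_mem N g' h⟩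
    rw [show ((⟨n₁, _⟩ : N) * ⟨n', _⟩ : N) = ⟨n₂, hn₂def ▸ nn_mem N (g * g') h⟩ from
      Subtype.ext hn] at this
    rw [this]
    push_cast
    ring
  rw [hc] at E
  have hb1 : ((β ⟨n₁, hn₁def ▸ nn_mem N g ((g' : G ⧸ N) * h)⟩ : ℂˣ) : ℂ) ≠ 0 :=
    Units.ne_zero _
  have hb2 : ((β ⟨n', hn'def ▸ nn_mem N g' h⟩ : ℂˣ) : ℂ) ≠ 0 := Units.ne_zero _
  have hb3 : ((β ⟨n₂, hn₂def ▸ nn_mem N (g * g') h⟩ : ℂˣ) : ℂ) ≠ 0 := Units.ne_zero _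
  field_simp at E
  apply mul_right_cancel₀ (b := ((β ⟨n₁, hn₁def ▸ nn_mem N g ((g' : G ⧸ N) * h)⟩ : ℂˣ) : ℂ) *
    ((β ⟨n', hn'def ▸ nn_mem N g' h⟩ : ℂˣ) : ℂ) *
    ((β ⟨n₂, hn₂def ▸ nn_mem N (g * g') h⟩ : ℂˣ) : ℂ))
    (mul_ne_zero (mul_ne_zero hb1 hb2) hb3)
  linear_combination (((β ⟨n₁, hn₁def ▸ nn_mem N g ((g' : G ⧸ N) * h)⟩ : ℂˣ) : ℂ) *
    ((β ⟨n', hn'def ▸ nn_mem N g' h⟩ : ℂˣ) : ℂ) *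
    ((β ⟨n₂, hn₂def ▸ nn_mem N (g * g') h⟩ : ℂˣ) : ℂ)) * E

section Hside

variable {H : Type} [Group H] [DecidableEq H]

lemma eunit_apply (h₁ h₂ : H) (f : H → ℂ) : Eunit H h₁ h₂ f = Pi.single h₁ (f h₂) := rfl

/-- Evaluation map used to prove linear independence of the matrix units. -/
noncomputable def evalE (c : H) : Module.End ℂ (H → ℂ) →ₗ[ℂ] (H → ℂ) where
  toFun T := fun h => T (Pi.single h 1) (c * h)
  map_add' S T := by funext h; simp
  map_smul' r T := by funext h; simp

lemma evalE_famE (c h' : H) : evalE c (Eunit H (c * h') h') = (Pi.single h' 1 : H → ℂ) := by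
  funext h
  show (Eunit H (c * h') h') (Pi.single h 1 : H → ℂ) (c * h) = _
  rw [eunit_apply]
  by_cases hh : h = h'
  · subst hh; simp
  · have h1 : (Pi.single h 1 : H → ℂ) h' = 0 := Pi.single_eq_of_ne (Ne.symm hh) _
    rw [h1]
    simp [Pi.single_eq_of_ne hh]

lemma famE_li [Finite H] (c : H) : LinearIndependent ℂ (fun h'' : H => Eunit H (c * h'') h'') := by
  apply LinearIndependent.of_comp (evalE c)
  have he : (⇑(evalE c) ∘ fun h'' : H => Eunit H (c * h'') h'') =
      fun h'' : H => (Pi.single h'' 1 : H → ℂ) := by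
    funext h''; exact evalE_famE c h''
  rw [he]
  have h2 : LinearIndependent ℂ (fun i : H => (Pi.single i 1 : H → ℂ)) := by
    have h3 := (Pi.basisFun ℂ H).linearIndependent
    have h4 : ⇑(Pi.basisFun ℂ H) = fun i : H => (Pi.single i 1 : H → ℂ) :=
      funext fun i => Pi.basisFun_apply ℂ H i
    rwa [h4] at h3
  exact h2

lemma elemComp_eq (c : H) :
    elemComp H c = Submodule.span ℂ (Set.range fun h'' : H => Eunit H (c * h'') h'') := by
  unfold elemComp
  congr 1
  ext T
  simp only [Set.mem_setOf_eq, Set.mem_range]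
  exact exists_congr fun h'' => eq_comm

lemma finrank_elemComp [Fintype H] (c : H) :
    Module.finrank ℂ (elemComp H c) = Nat.card H := by
  rw [elemComp_eq, finrank_span_eq_card (famE_li c), Nat.card_eq_fintype_card]

/-- The basis vector at the identity. -/
noncomputable def eone (H : Type) [One H] [DecidableEq H] : H → ℂ := Pi.single 1 1

/-- The defect of being "diagonal at the identity coset". -/
noncomputable def Ldiag (H : Type) [Group H] [DecidableEq H] :
    Module.End ℂ (H → ℂ) →ₗ[ℂ] (H → ℂ) where
  toFun T := T (eone H) - (T (eone H) 1) • eone H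
  map_add' S T := by simp [add_smul]; abel
  map_smul' r T := by simp [smul_sub, smul_smul]

lemma diag_spec {T : Module.End ℂ (H → ℂ)} (hT : T ∈ elemComp H 1) :
    T (eone H) = (T (eone H) 1) • eone H := by
  have hker : elemComp H 1 ≤ LinearMap.ker (Ldiag H) := by
    unfold elemComp
    rw [Submodule.span_le]
    rintro S ⟨h'', rfl⟩
    simp only [SetLike.mem_coe, LinearMap.mem_ker]
    show Eunit H (1 * h'') h'' (eone H) -
      (Eunit H (1 * h'') h'' (eone H) 1) • eone H = 0
    rw [one_mul, eunit_apply]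
    unfold eone
    by_cases hh : h'' = (1 : H)
    · subst hh; simp
    · rw [Pi.single_eq_of_ne hh]
      simp
  have hz := hker hT
  rw [LinearMap.mem_ker] at hz
  have hz' : T (eone H) - (T (eone H) 1) • eone H = 0 := hz
  exact sub_eq_zero.mp hz'

end Hside

lemma quotComp_eq (A : TwistedGroupAlgebra G α) (c : G ⧸ N) :
    A.quotComp N c = Submodule.span ℂ
      (Set.range fun g : {g : G // (g : G ⧸ N) = c} => A.basis g.1) := by
  unfold TwistedGroupAlgebra.quotComp
  congr 1
  ext x
  simp only [Set.mem_setOf_eq, Set.mem_range]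
  constructor
  · rintro ⟨g, hg, rfl⟩
    exact ⟨⟨g, hg⟩, A.basis_eq g⟩
  · rintro ⟨⟨g, hg⟩, rfl⟩
    exact ⟨g, hg, A.basis_eq g⟩

lemma card_fiber (c : G ⧸ N) :
    Nat.card {g : G // (g : G ⧸ N) = c} = Nat.card N := by
  apply Nat.card_congr
  refine ⟨fun g => ⟨(sig N c)⁻¹ * g.1, ?_⟩, fun n => ⟨sig N c * n.1, ?_⟩, ?_, ?_⟩
  · apply QuotientGroup.eq.mp
    rw [sig_spec, g.2]
  · rw [QuotientGroup.mk_mul, sig_spec, (QuotientGroup.eq_one_iff _).mpr n.2, mul_one]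
  · intro g; ext : 1; simp
  · intro n; ext : 1; simp

lemma finrank_quotComp [Fintype G] [DecidableEq (G ⧸ N)]
    (A : TwistedGroupAlgebra G α) (c : G ⧸ N) :
    Module.finrank ℂ (A.quotComp N c) = Nat.card N := by
  classical
  rw [quotComp_eq α N A c]
  have hli : LinearIndependent ℂ (fun g : {g : G // (g : G ⧸ N) = c} => A.basis g.1) :=
    A.basis.linearIndependent.comp Subtype.val Subtype.val_injective
  rw [finrank_span_eq_card hli, ← Nat.card_eq_fintype_card, card_fiber]

lemma stmt10_forward {G : Type} [Group G] [Fintype G] (α : G → G → ℂˣ)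
    (hα : IsTwoCocycle α) (A : TwistedGroupAlgebra G α)
    (N : Subgroup G) [N.Normal] [DecidableEq (G ⧸ N)]
    (ψ : A.carrier ≃ₐ[ℂ] Module.End ℂ ((G ⧸ N) → ℂ))
    (hψ : ∀ c : G ⧸ N, Submodule.map ψ.toLinearMap (A.quotComp N c) = elemComp (G ⧸ N) c) :
    ((∃ β : N → ℂˣ, ∀ n n' : N, α n n' = β n * β n' * (β (n * n'))⁻¹) ∧
      Nat.card N ^ 2 = Nat.card G) := by
  classical
  haveI : Fintype (G ⧸ N) := Fintype.ofFinite _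
  have hfr : Module.finrank ℂ (A.quotComp N 1) = Module.finrank ℂ (elemComp (G ⧸ N) 1) := by
    rw [← hψ 1, ← AlgEquiv.toLinearEquiv_toLinearMap]
    exact (LinearEquiv.finrank_map_eq ψ.toLinearEquiv _).symm
  rw [finrank_quotComp α N A 1, finrank_elemComp] at hfr
  constructor
  · -- construct β
    set χ : A.carrier → ℂ := fun a => ψ a (eone (G ⧸ N)) 1 with hχdef
    have hsm : ∀ (s : ℂ) (x : A.carrier), χ (s • x) = s * χ x := by
      intro s x; simp [hχdef, map_smul]
    have hmem : ∀ n : N, (A.u (n : G) : A.carrier) ∈ A.quotComp N 1 := fun n =>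
      Submodule.subset_span ⟨n, (QuotientGroup.eq_one_iff _).mpr n.2, rfl⟩
    have hdiagψ : ∀ x ∈ A.quotComp N 1,
        ψ x (eone (G ⧸ N)) = (ψ x (eone (G ⧸ N)) 1) • eone (G ⧸ N) := fun x hx =>
      diag_spec (by rw [← hψ 1]; exact Submodule.mem_map_of_mem hx)
    have hmul : ∀ x y : A.carrier, y ∈ A.quotComp N 1 → χ (x * y) = χ x * χ y := by
      intro x y hy
      show ψ (x * y) (eone (G ⧸ N)) 1 = _
      rw [map_mul, Module.End.mul_apply, hdiagψ y hy, map_smul]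
      simp [hχdef, mul_comm]
    have hone : χ 1 = 1 := by
      show ψ 1 (eone (G ⧸ N)) 1 = 1
      rw [map_one]
      unfold eone
      simp
    have hu1 : χ (A.u 1 : A.carrier) = ((α 1 1 : ℂˣ) : ℂ) := by
      rw [u_one_eq α A, hsm, hone, mul_one]
    have huprod : ∀ n n' : N, χ (A.u (n : G) : A.carrier) * χ (A.u (n' : G) : A.carrier) =
        ((α (n : G) (n' : G) : ℂˣ) : ℂ) * χ (A.u ((n * n' : N) : G) : A.carrier) := by
      intro n n'
      rw [← hmul _ _ (hmem n'), A.u_mul, hsm]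
      rfl
    have hne : ∀ n : N, χ (A.u (n : G) : A.carrier) ≠ 0 := by
      intro n
      have h1 := huprod n n⁻¹
      rw [mul_inv_cancel] at h1
      simp only [OneMemClass.coe_one] at h1
      rw [hu1] at h1
      apply left_ne_zero_of_mul (a := χ (A.u (n : G) : A.carrier))
        (b := χ (A.u ((n⁻¹ : N) : G) : A.carrier))
      rw [h1]
      exact mul_ne_zero (Units.ne_zero _) (Units.ne_zero _)
    refine ⟨fun n => Units.mk0 (χ (A.u (n : G) : A.carrier)) (hne n), ?_⟩
    intro n n'
    apply Units.ext
    push_cast [Units.val_mul, Units.val_inv_eq_inv_val, Units.val_mk0]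
    have h2 := huprod n n'
    have hco : ((n : G) * (n' : G)) = ((n * n' : N) : G) := rfl
    rw [hco, eq_comm, mul_inv_eq_iff_eq_mul₀ (hne (n * n'))]
    exact h2
  · -- cardinality
    rw [pow_two]
    nth_rewrite 1 [hfr]
    exact (Subgroup.card_eq_card_quotient_mul_card_subgroup N).symm

/-- The image of `u_g` under the graded isomorphism. -/
noncomputable def Tg (g : G) : Module.End ℂ ((G ⧸ N) → ℂ) where
  toFun f := fun h' => ccc α N β g (((g : G ⧸ N))⁻¹ * h') * f (((g : G ⧸ N))⁻¹ * h')
  map_add' f₁ f₂ := by funext h'; simp; ring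
  map_smul' r f := by funext h'; simp; ring

lemma Tg_apply (g : G) (f : (G ⧸ N) → ℂ) (h' : G ⧸ N) :
    Tg α N β g f h' =
      ccc α N β g (((g : G ⧸ N))⁻¹ * h') * f (((g : G ⧸ N))⁻¹ * h') := rfl

lemma Tg_mul (A : TwistedGroupAlgebra G α)
    (hβ : ∀ n n' : N, α n n' = β n * β n' * (β (n * n'))⁻¹) (g g' : G) :
    Tg α N β g * Tg α N β g' = ((α g g' : ℂˣ) : ℂ) • Tg α N β (g * g') := by
  apply LinearMap.ext; intro f; funext h'
  rw [Module.End.mul_apply, Tg_apply, Tg_apply, LinearMap.smul_apply, Pi.smul_apply,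
    Tg_apply, smul_eq_mul]
  have e2 : ((g' : G ⧸ N))⁻¹ * (((g : G ⧸ N))⁻¹ * h') = (((g * g' : G) : G ⧸ N))⁻¹ * h' := by
    rw [QuotientGroup.mk_mul]; group
  have e1 : ((g : G ⧸ N))⁻¹ * h' = (g' : G ⧸ N) * ((((g * g' : G) : G ⧸ N))⁻¹ * h') := by
    rw [QuotientGroup.mk_mul]; group
  rw [e2, e1]
  linear_combination (f ((((g * g' : G) : G ⧸ N))⁻¹ * h')) *
    keyE α N β A hβ g g' ((((g * g' : G) : G ⧸ N))⁻¹ * h')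

lemma Tg_one (A : TwistedGroupAlgebra G α)
    (hβ : ∀ n n' : N, α n n' = β n * β n' * (β (n * n'))⁻¹) (hα : IsTwoCocycle α) :
    Tg α N β 1 = ((α 1 1 : ℂˣ) : ℂ) • 1 := by
  apply LinearMap.ext; intro f; funext h'
  rw [Tg_apply, show ((1 : G) : G ⧸ N) = 1 from QuotientGroup.mk_one N, inv_one, one_mul,
    ccc_one α N β hβ hα]
  simp

lemma Tg_mem [Fintype (G ⧸ N)] [DecidableEq (G ⧸ N)] (g : G) :
    Tg α N β g ∈ elemComp (G ⧸ N) ((g : G ⧸ N)) := by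
  classical
  have hsum : Tg α N β g =
      ∑ h : G ⧸ N, ccc α N β g h • Eunit (G ⧸ N) ((g : G ⧸ N) * h) h := by
    apply LinearMap.ext; intro f; funext h'
    rw [Tg_apply]
    have happ : (∑ h : G ⧸ N, ccc α N β g h • Eunit (G ⧸ N) ((g : G ⧸ N) * h) h) f h' =
        ∑ h : G ⧸ N, ccc α N β g h * (Pi.single ((g : G ⧸ N) * h) (f h) : (G ⧸ N) → ℂ) h' := by
      simp [eunit_apply]
    rw [happ]
    have hterm : ∀ h : G ⧸ N,
        ccc α N β g h * (Pi.single ((g : G ⧸ N) * h) (f h) : (G ⧸ N) → ℂ) h' =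
        if ((g : G ⧸ N))⁻¹ * h' = h then ccc α N β g h * f h else 0 := by
      intro h
      rw [Pi.single_apply, mul_ite, mul_zero]
      exact if_congr inv_mul_eq_iff_eq_mul.symm rfl rfl
    rw [Finset.sum_congr rfl fun h _ => hterm h, Finset.sum_ite_eq]
    simp
  rw [hsum]
  apply Submodule.sum_mem
  intro h _
  exact Submodule.smul_mem _ _ (Submodule.subset_span ⟨h, rfl⟩)

end Stmt10Aux

open TwistedGroupAlgebra in
lemma stmt10_reverse {G : Type} [Group G] [Fintype G] (α : G → G → ℂˣ)
    (hα : IsTwoCocycle α) (A : TwistedGroupAlgebra G α) (hA : IsSimpleRing A.carrier)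
    (N : Subgroup G) [N.Normal] [DecidableEq (G ⧸ N)]
    (β : N → ℂˣ) (hβ : ∀ n n' : N, α n n' = β n * β n' * (β (n * n'))⁻¹)
    (hcard : Nat.card N ^ 2 = Nat.card G) :
    (∃ ψ : A.carrier ≃ₐ[ℂ] Module.End ℂ ((G ⧸ N) → ℂ),
      ∀ c : G ⧸ N, Submodule.map ψ.toLinearMap (A.quotComp N c) = elemComp (G ⧸ N) c) := by
  classical
  haveI : Fintype (G ⧸ N) := Fintype.ofFinite _
  haveI := carrier_nontrivial α A
  haveI : IsSimpleRing A.carrier := hA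
  haveI : Module.Finite ℂ A.carrier := Module.Finite.of_basis A.basis
  -- the linear map
  set ψ0 : A.carrier →ₗ[ℂ] Module.End ℂ ((G ⧸ N) → ℂ) :=
    A.basis.constr ℂ (fun g => Tg α N β g) with hψ0def
  have ψ0_u : ∀ g : G, ψ0 (A.u g : A.carrier) = Tg α N β g := by
    intro g
    rw [← A.basis_eq g, hψ0def]
    exact A.basis.constr_basis ℂ _ g
  have hone : ψ0 1 = 1 := by
    have h1 : (1 : A.carrier) = ((α 1 1 : ℂˣ) : ℂ)⁻¹ • (A.u 1 : A.carrier) := by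
      rw [u_one_eq α A, smul_smul, inv_mul_cancel₀ (Units.ne_zero _), one_smul]
    rw [h1, map_smul, ψ0_u, Tg_one α N β A hβ hα, smul_smul,
      inv_mul_cancel₀ (Units.ne_zero _), one_smul]
  have hmul : ∀ x y : A.carrier, ψ0 (x * y) = ψ0 x * ψ0 y := by
    rw [LinearMap.map_mul_iff]
    apply LinearMap.ext_basis A.basis A.basis
    intro g g'
    simp only [LinearMap.compr₂_apply, LinearMap.compl₂_apply, LinearMap.comp_apply,
      LinearMap.mul_apply']
    rw [A.basis_eq g, A.basis_eq g', A.u_mul, map_smul, ψ0_u, ψ0_u, ψ0_u,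
      Tg_mul α N β A hβ g g']
  set ψalg : A.carrier →ₐ[ℂ] Module.End ℂ ((G ⧸ N) → ℂ) :=
    AlgHom.ofLinearMap ψ0 hone hmul with hψalgdef
  -- cardinalities
  have hNpos : Nat.card N ≠ 0 := Nat.card_pos.ne'
  have hNH : Nat.card N = Nat.card (G ⧸ N) := by
    apply Nat.eq_of_mul_eq_mul_right (Nat.card_pos (α := N))
    rw [← pow_two, hcard, Subgroup.card_eq_card_quotient_mul_card_subgroup N]
  have hdim : Module.finrank ℂ A.carrier =
      Module.finrank ℂ (Module.End ℂ ((G ⧸ N) → ℂ)) := by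
    rw [Module.finrank_eq_card_basis A.basis, Module.finrank_linearMap, Module.finrank_pi]
    have : Fintype.card G = Fintype.card (G ⧸ N) * Fintype.card (G ⧸ N) := by
      rw [← Nat.card_eq_fintype_card, ← Nat.card_eq_fintype_card, ← hcard, pow_two, hNH]
    exact this
  have hinj : Function.Injective ψalg := by
    have := ψalg.toRingHom.injective
    exact this
  have hbij : Function.Bijective ψalg :=
    ⟨hinj, (LinearMap.injective_iff_surjective_of_finrank_eq_finrank hdim).mp hinj⟩
  refine ⟨AlgEquiv.ofBijective ψalg hbij, ?_⟩
  intro c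
  set ψ := AlgEquiv.ofBijective ψalg hbij with hψdef
  have hψ0 : ψ.toLinearMap = ψ0 := rfl
  have hle : Submodule.map ψ.toLinearMap (A.quotComp N c) ≤ elemComp (G ⧸ N) c := by
    unfold TwistedGroupAlgebra.quotComp
    rw [Submodule.map_span, Submodule.span_le]
    rintro x ⟨y, ⟨g, hg, rfl⟩, rfl⟩
    have : ψ.toLinearMap (A.u g : A.carrier) = Tg α N β g := by rw [hψ0]; exact ψ0_u g
    rw [SetLike.mem_coe, this, ← hg]
    exact Tg_mem α N β g
  have hfr : Module.finrank ℂ (Submodule.map ψ.toLinearMap (A.quotComp N c)) =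
      Module.finrank ℂ (elemComp (G ⧸ N) c) := by
    rw [← AlgEquiv.toLinearEquiv_toLinearMap, LinearEquiv.finrank_map_eq,
      finrank_quotComp α N A c, finrank_elemComp, hNH]
  exact Submodule.eq_of_le_of_finrank_eq hle hfr



open TwistedGroupAlgebra in
/-- **Theorem C.** Let `ℂ^αG` be a simple ring, `N ⊴ G`, `H := G/N`.
There is a ℂ-algebra isomorphism `ψ : ℂ^αG → End_ℂ(ℂ[H])` carrying the quotient
`H`-grading of `ℂ^αG` onto the elementary crossed product `H`-grading of
`End_ℂ(ℂ[H])` iff `N` is a Lagrangian with respect to the class of `α`. -/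
theorem stmt10 {G : Type} [Group G] [Fintype G] (α : G → G → ℂˣ) (hα : IsTwoCocycle α)
    (A : TwistedGroupAlgebra G α) (hA : IsSimpleRing A.carrier)
    (N : Subgroup G) [N.Normal] [DecidableEq (G ⧸ N)] :
    (∃ ψ : A.carrier ≃ₐ[ℂ] Module.End ℂ ((G ⧸ N) → ℂ),
      ∀ c : G ⧸ N, Submodule.map ψ.toLinearMap (A.quotComp N c) = elemComp (G ⧸ N) c) ↔
    ((∃ β : N → ℂˣ, ∀ n n' : N, α n n' = β n * β n' * (β (n * n'))⁻¹) ∧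
      Nat.card N ^ 2 = Nat.card G) := by
  constructor
  · rintro ⟨ψ, hψ⟩
    exact stmt10_forward α hα A N ψ hψ
  · rintro ⟨⟨β, hβ⟩, hcard⟩
    exact stmt10_reverse α hα A hA N β hβ hcard
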